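/- arXiv:2001.02608 — 3 statements merged into one kernel-verified Lean document; each statement's English description precedes it below -/
import Mathlib

section
/- Let R, S, T be groups, let U be a subgroup of R × S and V a subgroup of S × T, and let W = U * V. Then the thorax p₁(W)/k₁(W) of W is a factor group of the thorax p₁(U)/k₁(U) of U and of the thorax p₁(V)/k₁(V) of V; that is, there exist a subgroup H of p₁(U)/k₁(U) and a normal subgroup N of H with p₁(W)/k₁(W) ≅ H/N, and likewise there exist a subgroup H' of p₁(V)/k₁(V) and a normal subgroup N' of H' with p₁(W)/k₁(W) ≅ H'/N'. -/
open scoped Classical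

namespace SubgroupCat

variable {R S T : Type*}

/-- The star product of subgroups `U ≤ R × S` and `V ≤ S × T`:
`U * V = {(r, t) | ∃ s, (r, s) ∈ U ∧ (s, t) ∈ V}`. -/
def starProd [Group R] [Group S] [Group T] (U : Subgroup (R × S)) (V : Subgroup (S × T)) :
    Subgroup (R × T) where
  carrier := {rt | ∃ s : S, (rt.1, s) ∈ U ∧ (s, rt.2) ∈ V}
  one_mem' := ⟨1, one_mem U, one_mem V⟩
  mul_mem' := by
    rintro a b ⟨s, hU, hV⟩ ⟨s', hU', hV'⟩
    exact ⟨s * s', mul_mem hU hU', mul_mem hV hV'⟩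
  inv_mem' := by
    rintro a ⟨s, hU, hV⟩
    exact ⟨s⁻¹, inv_mem hU, inv_mem hV⟩

@[simp] lemma mem_starProd [Group R] [Group S] [Group T] {U : Subgroup (R × S)}
    {V : Subgroup (S × T)} {p : R × T} :
    p ∈ starProd U V ↔ ∃ s : S, (p.1, s) ∈ U ∧ (s, p.2) ∈ V := Iff.rfl

/-- First projection `p₁(U) = {r | ∃ s, (r, s) ∈ U}`. -/
def p1 [Group R] [Group S] (U : Subgroup (R × S)) : Subgroup R :=
  U.map (MonoidHom.fst R S)

/-- Second projection `p₂(U) = {s | ∃ r, (r, s) ∈ U}`. -/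
def p2 [Group R] [Group S] (U : Subgroup (R × S)) : Subgroup S :=
  U.map (MonoidHom.snd R S)

/-- First kernel `k₁(U) = {r | (r, 1) ∈ U}`. -/
def k1 [Group R] [Group S] (U : Subgroup (R × S)) : Subgroup R :=
  U.comap (MonoidHom.inl R S)

/-- Second kernel `k₂(U) = {s | (1, s) ∈ U}`. -/
def k2 [Group R] [Group S] (U : Subgroup (R × S)) : Subgroup S :=
  U.comap (MonoidHom.inr R S)

/-- `k₁(U)` is a normal subgroup of `p₁(U)`. -/
instance k1_normal [Group R] [Group S] (U : Subgroup (R × S)) :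
    ((k1 U).subgroupOf (p1 U)).Normal := by
  constructor
  intro n hn g
  rw [Subgroup.mem_subgroupOf] at hn ⊢
  obtain ⟨x, hx, h1⟩ := g.2
  have hn1 : ((n : R), (1 : S)) ∈ U := hn
  have key : (x * ((n : R), (1 : S)) * x⁻¹) ∈ U := mul_mem (mul_mem hx hn1) (inv_mem hx)
  have key' : ((x.1 * (n : R) * x.1⁻¹ : R), (1 : S)) ∈ U := by
    simpa [Prod.mul_def, Prod.inv_mk, Prod.ext_iff] using key
  have h1' : x.1 = (g : R) := h1
  show ((↑(g * n * g⁻¹) : R), (1 : S)) ∈ U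
  push_cast
  rw [← h1']
  exact key'

/-- `k₂(U)` is a normal subgroup of `p₂(U)`. -/
instance k2_normal [Group R] [Group S] (U : Subgroup (R × S)) :
    ((k2 U).subgroupOf (p2 U)).Normal := by
  constructor
  intro n hn g
  rw [Subgroup.mem_subgroupOf] at hn ⊢
  obtain ⟨x, hx, h1⟩ := g.2
  have hn1 : ((1 : R), (n : S)) ∈ U := hn
  have key : (x * ((1 : R), (n : S)) * x⁻¹) ∈ U := mul_mem (mul_mem hx hn1) (inv_mem hx)
  have key' : ((1 : R), (x.2 * (n : S) * x.2⁻¹ : S)) ∈ U := by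
    simpa [Prod.mul_def, Prod.inv_mk, Prod.ext_iff] using key
  have h1' : x.2 = (g : S) := h1
  show ((1 : R), (↑(g * n * g⁻¹) : S)) ∈ U
  push_cast
  rw [← h1']
  exact key'

/-- If `f : A →* B` is a homomorphism and `K` is a normal subgroup containing `ker f`,
then `A ⧸ K` is a factor group of `B`. -/
lemma factor_of_hom {A B : Type*} [Group A] [Group B] (f : A →* B) (K : Subgroup A)
    [hK : K.Normal] (h : f.ker ≤ K) :
    ∃ (H : Subgroup B) (N : Subgroup H) (_ : N.Normal), Nonempty (A ⧸ K ≃* H ⧸ N) := by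
  have hs : Function.Surjective f.rangeRestrict := f.rangeRestrict_surjective
  have hNormal : (K.map f.rangeRestrict).Normal := Subgroup.Normal.map hK _ hs
  refine ⟨f.range, K.map f.rangeRestrict, hNormal, ?_⟩
  set φ := (QuotientGroup.mk' (K.map f.rangeRestrict)).comp f.rangeRestrict with hφ
  have hφs : Function.Surjective φ := (QuotientGroup.mk'_surjective _).comp hs
  have hker : φ.ker = K := by
    ext x
    simp only [hφ, MonoidHom.mem_ker, MonoidHom.comp_apply, QuotientGroup.mk'_apply,
      QuotientGroup.eq_one_iff, Subgroup.mem_map]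
    constructor
    · rintro ⟨k, hk, hke⟩
      have h1 : k⁻¹ * x ∈ f.rangeRestrict.ker := by
        rw [MonoidHom.mem_ker, map_mul, map_inv, hke, inv_mul_cancel]
      rw [f.ker_rangeRestrict] at h1
      have := mul_mem hk (h h1)
      simpa using this
    · intro hx
      exact ⟨x, hx, rfl⟩
  exact ⟨(QuotientGroup.quotientMulEquivOfEq hker.symm).trans
    (QuotientGroup.quotientKerEquivOfSurjective φ hφs)⟩

lemma mem_p1' [Group R] [Group S] {U : Subgroup (R × S)} {r : R} :
    r ∈ p1 U ↔ ∃ s, (r, s) ∈ U := by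
  constructor
  · rintro ⟨⟨a, b⟩, hab, rfl⟩
    exact ⟨b, hab⟩
  · rintro ⟨s, hs⟩
    exact ⟨(r, s), hs, rfl⟩

lemma mem_p2' [Group R] [Group S] {U : Subgroup (R × S)} {s : S} :
    s ∈ p2 U ↔ ∃ r, (r, s) ∈ U := by
  constructor
  · rintro ⟨⟨a, b⟩, hab, rfl⟩
    exact ⟨a, hab⟩
  · rintro ⟨r, hr⟩
    exact ⟨(r, s), hr, rfl⟩

lemma mk_congr [Group R] [Group T] (W : Subgroup (R × T)) (r : R) (a b : ↥(p2 W))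
    (ha : (r, (a : T)) ∈ W) (hb : (r, (b : T)) ∈ W) :
    (QuotientGroup.mk a : p2 W ⧸ (k2 W).subgroupOf (p2 W)) = QuotientGroup.mk b := by
  rw [QuotientGroup.eq, Subgroup.mem_subgroupOf]
  have h2 : ((1 : R), (a : T)⁻¹ * (b : T)) ∈ W := by
    have := mul_mem (inv_mem ha) hb
    simpa using this
  rw [k2, Subgroup.mem_comap]
  simpa using h2

/-- The canonical homomorphism from `p₁(W)` to `p₂(W)/k₂(W)`. -/
noncomputable def thoraxHom [Group R] [Group T] (W : Subgroup (R × T)) :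
    ↥(p1 W) →* (p2 W ⧸ (k2 W).subgroupOf (p2 W)) where
  toFun r := QuotientGroup.mk ⟨Classical.choose (mem_p1'.mp r.2),
    mem_p2'.mpr ⟨(r : R), Classical.choose_spec (mem_p1'.mp r.2)⟩⟩
  map_one' := by
    have h := Classical.choose_spec (mem_p1'.mp (1 : ↥(p1 W)).2)
    have key : (QuotientGroup.mk ⟨Classical.choose (mem_p1'.mp (1 : ↥(p1 W)).2),
        mem_p2'.mpr ⟨((1 : ↥(p1 W)) : R), h⟩⟩ :
          p2 W ⧸ (k2 W).subgroupOf (p2 W)) = QuotientGroup.mk (1 : ↥(p2 W)) :=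
      mk_congr W _ _ 1 h (one_mem W)
    simpa using key
  map_mul' := by
    intro a b
    have ha := Classical.choose_spec (mem_p1'.mp a.2)
    have hb := Classical.choose_spec (mem_p1'.mp b.2)
    have hab := Classical.choose_spec (mem_p1'.mp (a * b).2)
    rw [← QuotientGroup.mk_mul]
    exact mk_congr W ((a * b : ↥(p1 W)) : R) _ _ hab (mul_mem ha hb)

lemma thoraxHom_apply [Group R] [Group T] (W : Subgroup (R × T)) (r : ↥(p1 W)) :
    thoraxHom W r = QuotientGroup.mk ⟨Classical.choose (mem_p1'.mp r.2),
      mem_p2'.mpr ⟨(r : R), Classical.choose_spec (mem_p1'.mp r.2)⟩⟩ := rfl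

lemma thoraxHom_surjective [Group R] [Group T] (W : Subgroup (R × T)) :
    Function.Surjective (thoraxHom W) := by
  intro q
  obtain ⟨t, rfl⟩ := QuotientGroup.mk_surjective q
  obtain ⟨r, hr⟩ := mem_p2'.mp t.2
  refine ⟨⟨r, mem_p1'.mpr ⟨(t : T), hr⟩⟩, ?_⟩
  rw [thoraxHom_apply]
  exact mk_congr W r _ t
    (Classical.choose_spec (mem_p1'.mp (⟨r, mem_p1'.mpr ⟨(t : T), hr⟩⟩ : ↥(p1 W)).2)) hr

lemma thoraxHom_ker [Group R] [Group T] (W : Subgroup (R × T)) :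
    (thoraxHom W).ker = (k1 W).subgroupOf (p1 W) := by
  ext r
  rw [MonoidHom.mem_ker, Subgroup.mem_subgroupOf, thoraxHom_apply]
  have hc := Classical.choose_spec (mem_p1'.mp r.2)
  constructor
  · intro h
    rw [QuotientGroup.eq_one_iff, Subgroup.mem_subgroupOf] at h
    have h' : ((1 : R), Classical.choose (mem_p1'.mp r.2)) ∈ W := h
    have := mul_mem hc (inv_mem h')
    rw [k1, Subgroup.mem_comap]
    simpa using this
  · intro h
    have h' : ((r : R), (1 : T)) ∈ W := h
    rw [QuotientGroup.eq_one_iff, Subgroup.mem_subgroupOf]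
    have := mul_mem (inv_mem h') hc
    show ((1 : R), Classical.choose (mem_p1'.mp r.2)) ∈ W
    simpa using this

/-- The thorax symmetry: `p₁(W)/k₁(W) ≅ p₂(W)/k₂(W)`. -/
noncomputable def thoraxEquiv [Group R] [Group T] (W : Subgroup (R × T)) :
    (p1 W ⧸ (k1 W).subgroupOf (p1 W)) ≃* (p2 W ⧸ (k2 W).subgroupOf (p2 W)) :=
  (QuotientGroup.quotientMulEquivOfEq (thoraxHom_ker W).symm).trans
    (QuotientGroup.quotientKerEquivOfSurjective _ (thoraxHom_surjective W))

/-- The thorax of `U * V` is a factor group of the thorax of `U` and of the thorax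
of `V`. -/
theorem thorax_star_factor (R S T : Type*) [Group R] [Group S] [Group T]
    (U : Subgroup (R × S)) (V : Subgroup (S × T)) :
    (∃ (H : Subgroup (p1 U ⧸ (k1 U).subgroupOf (p1 U))) (N : Subgroup H) (_ : N.Normal),
      Nonempty
        ((p1 (starProd U V) ⧸ (k1 (starProd U V)).subgroupOf (p1 (starProd U V))) ≃* H ⧸ N)) ∧
    (∃ (H' : Subgroup (p1 V ⧸ (k1 V).subgroupOf (p1 V))) (N' : Subgroup H') (_ : N'.Normal),
      Nonempty
        ((p1 (starProd U V) ⧸ (k1 (starProd U V)).subgroupOf (p1 (starProd U V))) ≃* H' ⧸ N')) := by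
  set W := starProd U V with hW
  constructor
  · -- factor of the thorax of U
    have hle : p1 W ≤ p1 U := by
      intro r hr
      obtain ⟨t, ht⟩ := mem_p1'.mp hr
      obtain ⟨s, h1, h2⟩ := ht
      exact mem_p1'.mpr ⟨s, h1⟩
    set f₁ := (QuotientGroup.mk' ((k1 U).subgroupOf (p1 U))).comp (Subgroup.inclusion hle)
      with hf1
    have hker : f₁.ker ≤ (k1 W).subgroupOf (p1 W) := by
      intro x hx
      rw [hf1, MonoidHom.mem_ker, MonoidHom.comp_apply, QuotientGroup.mk'_apply,
        QuotientGroup.eq_one_iff, Subgroup.mem_subgroupOf] at hx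
      have hx' : ((x : R), (1 : S)) ∈ U := hx
      rw [Subgroup.mem_subgroupOf]
      exact ⟨1, hx', one_mem V⟩
    exact factor_of_hom f₁ _ hker
  · -- factor of the thorax of V
    have hle2 : p2 W ≤ p2 V := by
      intro t ht
      obtain ⟨r, hr⟩ := mem_p2'.mp ht
      obtain ⟨s, h1, h2⟩ := hr
      exact mem_p2'.mpr ⟨s, h2⟩
    set f₂ := (thoraxEquiv V).symm.toMonoidHom.comp
      ((QuotientGroup.mk' ((k2 V).subgroupOf (p2 V))).comp (Subgroup.inclusion hle2))
      with hf2
    have hker2 : f₂.ker ≤ (k2 W).subgroupOf (p2 W) := by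
      intro x hx
      rw [hf2, MonoidHom.mem_ker, MonoidHom.comp_apply] at hx
      have hx1 : QuotientGroup.mk' ((k2 V).subgroupOf (p2 V)) (Subgroup.inclusion hle2 x)
          = 1 := by
        apply (thoraxEquiv V).symm.injective
        simpa using hx
      rw [QuotientGroup.mk'_apply, QuotientGroup.eq_one_iff, Subgroup.mem_subgroupOf] at hx1
      have hx' : ((1 : S), (x : T)) ∈ V := hx1
      rw [Subgroup.mem_subgroupOf]
      exact ⟨1, one_mem U, hx'⟩
    obtain ⟨H', N', hN', ⟨e⟩⟩ := factor_of_hom f₂ ((k2 W).subgroupOf (p2 W)) hker2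
    exact ⟨H', N', hN', ⟨(thoraxEquiv W).trans e⟩⟩

end SubgroupCat
end

section
/- Let F, G, H, I be finite groups, and let U ≤ F × G, V ≤ G × H, W ≤ H × I be subgroups. Then |k₂(U) ∩ k₁(V)| · |k₂(U * V) ∩ k₁(W)| = |k₂(U) ∩ k₁(V * W)| · |k₂(V) ∩ k₁(W)|, where |·| denotes the order of a subgroup. -/
open scoped Classical

namespace SubgroupCat

variable {R S T : Type*}

lemma mem_k1 [Group R] [Group S] {U : Subgroup (R × S)} {r : R} :
    r ∈ k1 U ↔ ((r, 1) : R × S) ∈ U := Iff.rfl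

lemma mem_k2 [Group R] [Group S] {U : Subgroup (R × S)} {s : S} :
    s ∈ k2 U ↔ ((1, s) : R × S) ∈ U := Iff.rfl

lemma card_eq_card_ker_mul_card_range {M N : Type*} [Group M] [Group N] [Finite M]
    (f : M →* N) : Nat.card M = Nat.card f.ker * Nat.card f.range := by
  rw [Subgroup.card_eq_card_quotient_mul_card_subgroup f.ker,
    Nat.card_congr (QuotientGroup.quotientKerEquivRange f).toEquiv, mul_comm]

/-- **Boltje–Danz.** For finite groups `F, G, H, I` and subgroups `U ≤ F × G`,
`V ≤ G × H`, `W ≤ H × I`, one has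
`|k₂(U) ∩ k₁(V)| · |k₂(U * V) ∩ k₁(W)| = |k₂(U) ∩ k₁(V * W)| · |k₂(V) ∩ k₁(W)|`. -/
theorem card_inter_star_mul (F G H I : Type*) [Group F] [Group G] [Group H] [Group I]
    [Finite F] [Finite G] [Finite H] [Finite I]
    (U : Subgroup (F × G)) (V : Subgroup (G × H)) (W : Subgroup (H × I)) :
    Nat.card ↥(k2 U ⊓ k1 V) * Nat.card ↥(k2 (starProd U V) ⊓ k1 W) =
      Nat.card ↥(k2 U ⊓ k1 (starProd V W)) * Nat.card ↥(k2 V ⊓ k1 W) := by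
  classical
  set M : Subgroup (G × H) := V ⊓ (k2 U).prod (k1 W) with hM
  have memM : ∀ p : G × H, p ∈ M ↔ p ∈ V ∧ p.1 ∈ k2 U ∧ p.2 ∈ k1 W := by
    intro p
    rw [hM, Subgroup.mem_inf, Subgroup.mem_prod]
  let f : ↥M →* H := (MonoidHom.snd G H).comp M.subtype
  let g : ↥M →* G := (MonoidHom.fst G H).comp M.subtype
  -- range of f
  have e2 : f.range = k2 (starProd U V) ⊓ k1 W := by
    ext h
    simp only [MonoidHom.mem_range, Subgroup.mem_inf, mem_k2, mem_k1, mem_starProd]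
    constructor
    · rintro ⟨⟨⟨a, b⟩, hm⟩, rfl⟩
      obtain ⟨hV, hU, hW⟩ := (memM _).1 hm
      exact ⟨⟨a, hU, hV⟩, hW⟩
    · rintro ⟨⟨a, hU, hV⟩, hW⟩
      exact ⟨⟨(a, h), (memM _).2 ⟨hV, hU, hW⟩⟩, rfl⟩
  -- range of g
  have e4 : g.range = k2 U ⊓ k1 (starProd V W) := by
    ext a
    simp only [MonoidHom.mem_range, Subgroup.mem_inf, mem_k2, mem_k1, mem_starProd]
    constructor
    · rintro ⟨⟨⟨a', b⟩, hm⟩, rfl⟩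
      obtain ⟨hV, hU, hW⟩ := (memM _).1 hm
      exact ⟨hU, ⟨b, hV, hW⟩⟩
    · rintro ⟨hU, ⟨b, hV, hW⟩⟩
      exact ⟨⟨(a, b), (memM _).2 ⟨hV, hU, hW⟩⟩, rfl⟩
  -- kernel of f
  have e1 : Nat.card ↥f.ker = Nat.card ↥(k2 U ⊓ k1 V) := by
    apply Nat.card_congr
    have key : ∀ x : f.ker, ((x : ↥M) : G × H).1 ∈ k2 U ⊓ k1 V := by
      rintro ⟨⟨⟨a, b⟩, hm⟩, hb⟩
      obtain ⟨hV, hU, hW⟩ := (memM _).1 hm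
      have hb' : b = 1 := hb
      subst hb'
      exact ⟨hU, hV⟩
    refine Equiv.ofBijective (fun x => ⟨_, key x⟩) ⟨?_, ?_⟩
    · rintro ⟨⟨⟨a, b⟩, hm⟩, hb⟩ ⟨⟨⟨a', b'⟩, hm'⟩, hb'⟩ h
      have hb1 : b = 1 := hb
      have hb2 : b' = 1 := hb'
      have ha : a = a' := congrArg Subtype.val h
      subst hb1; subst hb2; subst ha
      rfl
    · rintro ⟨y, hU, hV⟩
      exact ⟨⟨⟨(y, 1), (memM _).2 ⟨hV, hU, one_mem _⟩⟩, rfl⟩, rfl⟩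
  -- kernel of g
  have e3 : Nat.card ↥g.ker = Nat.card ↥(k2 V ⊓ k1 W) := by
    apply Nat.card_congr
    have key : ∀ x : g.ker, ((x : ↥M) : G × H).2 ∈ k2 V ⊓ k1 W := by
      rintro ⟨⟨⟨a, b⟩, hm⟩, ha⟩
      obtain ⟨hV, hU, hW⟩ := (memM _).1 hm
      have ha' : a = 1 := ha
      subst ha'
      exact ⟨hV, hW⟩
    refine Equiv.ofBijective (fun x => ⟨_, key x⟩) ⟨?_, ?_⟩
    · rintro ⟨⟨⟨a, b⟩, hm⟩, ha⟩ ⟨⟨⟨a', b'⟩, hm'⟩, ha'⟩ h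
      have ha1 : a = 1 := ha
      have ha2 : a' = 1 := ha'
      have hb : b = b' := congrArg Subtype.val h
      subst ha1; subst ha2; subst hb
      rfl
    · rintro ⟨y, hV, hW⟩
      exact ⟨⟨⟨(1, y), (memM _).2 ⟨hV, one_mem _, hW⟩⟩, rfl⟩, rfl⟩
  have h1 := card_eq_card_ker_mul_card_range f
  have h2 := card_eq_card_ker_mul_card_range g
  rw [e1, e2] at h1
  rw [e3, e4] at h2
  rw [← h1, h2, mul_comm]

end SubgroupCat
end

section
/- Let F, G, H, I be finite groups, and let U ≤ F × G, V ≤ G × H, W ≤ H × I be subgroups. Then k₂(U) ∩ k₁(V) is a normal subgroup of k₂(U) ∩ k₁(V * W), and k₂(V) ∩ k₁(W) is a normal subgroup of k₂(U * V) ∩ k₁(W), and there is a group isomorphism (k₂(U) ∩ k₁(V * W)) / (k₂(U) ∩ k₁(V)) ≅ (k₂(U * V) ∩ k₁(W)) / (k₂(V) ∩ k₁(W)). -/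
open scoped Classical

namespace SubgroupCat

variable {R S T : Type*}

section Aux

variable [Group R] [Group S]

lemma mem_k1_iff {U : Subgroup (R × S)} {r : R} : r ∈ k1 U ↔ (r, (1 : S)) ∈ U := Iff.rfl

lemma mem_k2_iff {U : Subgroup (R × S)} {s : S} : s ∈ k2 U ↔ ((1 : R), s) ∈ U := Iff.rfl

end Aux

/-- For finite groups `F, G, H, I` and subgroups `U ≤ F × G`, `V ≤ G × H`, `W ≤ H × I`:
`k₂(U) ∩ k₁(V)` is a normal subgroup of `k₂(U) ∩ k₁(V * W)`, `k₂(V) ∩ k₁(W)` is a normal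
subgroup of `k₂(U * V) ∩ k₁(W)`, and the corresponding quotients are isomorphic. -/
theorem quotient_inter_star_iso (F G H I : Type*) [Group F] [Group G] [Group H] [Group I]
    [Finite F] [Finite G] [Finite H] [Finite I]
    (U : Subgroup (F × G)) (V : Subgroup (G × H)) (W : Subgroup (H × I)) :
    k2 U ⊓ k1 V ≤ k2 U ⊓ k1 (starProd V W) ∧
    k2 V ⊓ k1 W ≤ k2 (starProd U V) ⊓ k1 W ∧
    ∃ (_ : ((k2 U ⊓ k1 V).subgroupOf (k2 U ⊓ k1 (starProd V W))).Normal)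
      (_ : ((k2 V ⊓ k1 W).subgroupOf (k2 (starProd U V) ⊓ k1 W)).Normal),
      Nonempty
        ((↥(k2 U ⊓ k1 (starProd V W)) ⧸ (k2 U ⊓ k1 V).subgroupOf (k2 U ⊓ k1 (starProd V W))) ≃*
          (↥(k2 (starProd U V) ⊓ k1 W) ⧸ (k2 V ⊓ k1 W).subgroupOf (k2 (starProd U V) ⊓ k1 W))) := by
  classical
  have hMX : k2 U ⊓ k1 V ≤ k2 U ⊓ k1 (starProd V W) := by
    rintro g ⟨h1, h2⟩
    exact ⟨h1, ⟨1, h2, one_mem W⟩⟩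
  have hNY : k2 V ⊓ k1 W ≤ k2 (starProd U V) ⊓ k1 W := by
    rintro h ⟨h1, h2⟩
    exact ⟨⟨1, one_mem U, h1⟩, h2⟩
  refine ⟨hMX, hNY, ?_⟩
  set X := k2 U ⊓ k1 (starProd V W) with hXdef
  set Y := k2 (starProd U V) ⊓ k1 W with hYdef
  set M := k2 U ⊓ k1 V with hMdef
  set N := k2 V ⊓ k1 W with hNdef
  have memN : ∀ h : H, h ∈ N ↔ (((1:G), h) ∈ V ∧ (h, (1:I)) ∈ W) := fun h => Iff.rfl
  have memM : ∀ g : G, g ∈ M ↔ (((1:F), g) ∈ U ∧ (g, (1:H)) ∈ V) := fun g => Iff.rfl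
  haveI hNnorm : (N.subgroupOf Y).Normal := by
    constructor
    rintro ⟨n, hnY⟩ hn ⟨y, hyY⟩
    rw [Subgroup.mem_subgroupOf] at hn ⊢
    obtain ⟨hn1, hn2⟩ := (memN n).mp hn
    have hy1 : ((1:F), y) ∈ starProd U V := hyY.1
    have hy2 : (y, (1:I)) ∈ W := hyY.2
    obtain ⟨g, hgU, hgV⟩ := hy1
    have h1 : ((1:G), y * n * y⁻¹) ∈ V := by
      have := mul_mem (mul_mem hgV hn1) (inv_mem hgV)
      simpa using this
    have h2 : (y * n * y⁻¹, (1:I)) ∈ W := by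
      have := mul_mem (mul_mem hy2 hn2) (inv_mem hy2)
      simpa using this
    exact (memN _).mpr ⟨h1, h2⟩
  have hchoice : ∀ x : X, ∃ h : H, ((x : G), h) ∈ V ∧ (h, (1:I)) ∈ W := fun x => x.2.2
  choose f hfV hfW using hchoice
  have hfY : ∀ x : X, f x ∈ Y := fun x => ⟨⟨(x : G), x.2.1, hfV x⟩, hfW x⟩
  have key : ∀ (x : X) (h' : H), ((x : G), h') ∈ V → (h', (1:I)) ∈ W →
      (f x)⁻¹ * h' ∈ N := by
    intro x h' hV' hW'
    refine (memN _).mpr ⟨?_, ?_⟩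
    · have := mul_mem (inv_mem (hfV x)) hV'
      simpa using this
    · have := mul_mem (inv_mem (hfW x)) hW'
      simpa using this
  let φ : X →* (Y ⧸ N.subgroupOf Y) :=
    MonoidHom.mk' (fun x => QuotientGroup.mk ⟨f x, hfY x⟩) (by
      intro a b
      rw [← QuotientGroup.mk_mul, QuotientGroup.eq, Subgroup.mem_subgroupOf]
      refine key (a * b) (f a * f b) ?_ ?_
      · have := mul_mem (hfV a) (hfV b)
        simpa using this
      · have := mul_mem (hfW a) (hfW b)
        simpa using this)
  have hker : φ.ker = M.subgroupOf X := by
    ext x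
    rw [MonoidHom.mem_ker, Subgroup.mem_subgroupOf]
    show QuotientGroup.mk _ = _ ↔ _
    rw [QuotientGroup.eq_one_iff, Subgroup.mem_subgroupOf]
    show f x ∈ N ↔ _
    constructor
    · intro hfN
      obtain ⟨h1, h2⟩ := (memN _).mp hfN
      refine (memM _).mpr ⟨x.2.1, ?_⟩
      have := mul_mem (hfV x) (inv_mem h1)
      simpa using this
    · intro hxM
      obtain ⟨h1, h2⟩ := (memM _).mp hxM
      refine (memN _).mpr ⟨?_, hfW x⟩
      have := mul_mem (inv_mem h2) (hfV x)
      simpa using this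
  have hsurj : Function.Surjective φ := by
    intro q
    induction q using QuotientGroup.induction_on with
    | H y =>
      have hy1 : ((1:F), (y:H)) ∈ starProd U V := y.2.1
      have hy2 : ((y:H), (1:I)) ∈ W := y.2.2
      obtain ⟨g, hgU, hgV⟩ := hy1
      have hgX : g ∈ X := ⟨hgU, ⟨(y : H), hgV, hy2⟩⟩
      refine ⟨⟨g, hgX⟩, ?_⟩
      show QuotientGroup.mk _ = QuotientGroup.mk _
      rw [QuotientGroup.eq, Subgroup.mem_subgroupOf]
      exact key ⟨g, hgX⟩ (y : H) hgV hy2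
  haveI hMnorm : (M.subgroupOf X).Normal := hker ▸ (MonoidHom.normal_ker φ)
  refine ⟨hMnorm, hNnorm, ⟨?_⟩⟩
  exact (QuotientGroup.quotientMulEquivOfEq hker.symm).trans
    (QuotientGroup.quotientKerEquivOfSurjective φ hsurj)


end SubgroupCat
end
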